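/- There exist a complex Hilbert space E and positive compact bounded linear operators A₁, B₁ on E such that for every compact bounded linear operator D on E and every λ ∈ ℂ, one has A₁^{1/2} ≠ (A₁ + B₁)^{1/2}∘(D + λ·I); that is, the equation A^{1/2} = (A+B)^{1/2}∘X has no solution X in the unital C*-algebra generated by the compact operators together with the identity. (Consequently, in the Hilbert C*-module setting, the operator equation A^{1/2} = (A+B)^{1/2}X with X adjointable can fail to be solvable for positive adjointable operators A, B.) -/

import Mathlib

noncomputable section
namespace SqrtCX
open ContinuousLinearMap
open scoped ENNReal ComplexConjugate InnerProductSpace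

abbrev H : Type := lp (fun _ : ℕ => ℂ) 2

lemma htoRealpos : 0 < (2 : ℝ≥0∞).toReal := by norm_num

lemma memℓp_diag {c : ℕ → ℝ} {M : ℝ} (hM : ∀ n, |c n| ≤ M) (x : H) :
    Memℓp (fun n => (c n : ℂ) * x n) 2 := by
  apply memℓp_gen
  have hx : Summable fun n => ‖x n‖ ^ (2 : ℝ≥0∞).toReal := (lp.memℓp x).summable htoRealpos
  have hM0 : 0 ≤ M := le_trans (abs_nonneg _) (hM 0)
  refine Summable.of_nonneg_of_le (fun n => Real.rpow_nonneg (norm_nonneg _) _)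
    (fun n => ?_) (hx.mul_left (M ^ (2 : ℝ≥0∞).toReal))
  have h1 : ‖(c n : ℂ) * x n‖ ≤ M * ‖x n‖ := by
    rw [norm_mul, Complex.norm_real]
    exact mul_le_mul_of_nonneg_right (by simpa using hM n) (norm_nonneg _)
  calc ‖(c n : ℂ) * x n‖ ^ (2 : ℝ≥0∞).toReal
      ≤ (M * ‖x n‖) ^ (2 : ℝ≥0∞).toReal :=
        Real.rpow_le_rpow (norm_nonneg _) h1 htoRealpos.le
    _ = M ^ (2 : ℝ≥0∞).toReal * ‖x n‖ ^ (2 : ℝ≥0∞).toReal :=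
        Real.mul_rpow hM0 (norm_nonneg _)

/-- the diagonal operator with diagonal `c`, bounded by `M`. -/
def diag (c : ℕ → ℝ) {M : ℝ} (hM : ∀ n, |c n| ≤ M) : H →L[ℂ] H :=
  LinearMap.mkContinuous
    { toFun := fun x => (⟨fun n => (c n : ℂ) * x n, memℓp_diag hM x⟩ : H)
      map_add' := fun x y => by
        apply lp.ext; funext n
        simp [lp.coeFn_add, mul_add, Pi.add_apply]
        rfl
      map_smul' := fun a x => by
        apply lp.ext; funext n
        simp [lp.coeFn_smul, Pi.smul_apply, smul_eq_mul]
        ring } M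
    (by
      intro x
      have hM0 : 0 ≤ M := le_trans (abs_nonneg _) (hM 0)
      refine lp.norm_le_of_forall_sum_le htoRealpos (mul_nonneg hM0 (norm_nonneg _)) fun s => ?_
      have key : ∀ n, ‖(c n : ℂ) * x n‖ ^ (2 : ℝ≥0∞).toReal
          ≤ M ^ (2 : ℝ≥0∞).toReal * ‖x n‖ ^ (2 : ℝ≥0∞).toReal := by
        intro n
        have h1 : ‖(c n : ℂ) * x n‖ ≤ M * ‖x n‖ := by
          rw [norm_mul, Complex.norm_real]
          exact mul_le_mul_of_nonneg_right (by simpa using hM n) (norm_nonneg _)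
        calc ‖(c n : ℂ) * x n‖ ^ (2 : ℝ≥0∞).toReal
            ≤ (M * ‖x n‖) ^ (2 : ℝ≥0∞).toReal :=
              Real.rpow_le_rpow (norm_nonneg _) h1 htoRealpos.le
          _ = M ^ (2 : ℝ≥0∞).toReal * ‖x n‖ ^ (2 : ℝ≥0∞).toReal :=
              Real.mul_rpow hM0 (norm_nonneg _)
      calc ∑ i ∈ s, ‖(⟨fun n => (c n : ℂ) * x n, memℓp_diag hM x⟩ : H) i‖ ^ (2 : ℝ≥0∞).toReal
          = ∑ i ∈ s, ‖(c i : ℂ) * x i‖ ^ (2 : ℝ≥0∞).toReal := rfl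
        _ ≤ ∑ i ∈ s, M ^ (2 : ℝ≥0∞).toReal * ‖x i‖ ^ (2 : ℝ≥0∞).toReal :=
            Finset.sum_le_sum fun i _ => key i
        _ = M ^ (2 : ℝ≥0∞).toReal * ∑ i ∈ s, ‖x i‖ ^ (2 : ℝ≥0∞).toReal := by
            rw [Finset.mul_sum]
        _ ≤ M ^ (2 : ℝ≥0∞).toReal * ‖x‖ ^ (2 : ℝ≥0∞).toReal := by
            refine mul_le_mul_of_nonneg_left ?_ (Real.rpow_nonneg hM0 _)
            exact lp.sum_rpow_le_norm_rpow htoRealpos x s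
        _ = (M * ‖x‖) ^ (2 : ℝ≥0∞).toReal := (Real.mul_rpow hM0 (norm_nonneg _)).symm)

@[simp] lemma diag_apply (c : ℕ → ℝ) {M : ℝ} (hM : ∀ n, |c n| ≤ M) (x : H) (n : ℕ) :
    (diag c hM x) n = (c n : ℂ) * x n := rfl


lemma diag_norm_le (c : ℕ → ℝ) {M : ℝ} (hM : ∀ n, |c n| ≤ M) (hM0 : 0 ≤ M) :
    ‖diag c hM‖ ≤ M :=
  LinearMap.mkContinuous_norm_le _ hM0 _

/-- basis vector -/
def e (n : ℕ) : H := lp.single 2 n 1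

@[simp] lemma inner_e_e (n : ℕ) : ⟪e n, e n⟫_ℂ = 1 := by
  rw [e, lp.inner_single_left, lp.single_apply_self]
  simp

lemma norm_e (n : ℕ) : ‖e n‖ = 1 := by
  have h := lp.norm_single (E := fun _ : ℕ => ℂ) (p := 2) (by norm_num) n (1 : ℂ)
  simpa [e] using h

lemma htoRealpos' : 0 < (2 : ℝ≥0∞).toReal := by norm_num

lemma diag_single (c : ℕ → ℝ) {M : ℝ} (hM : ∀ n, |c n| ≤ M) (n : ℕ) :
    diag c hM (e n) = ((c n : ℂ)) • e n := by
  apply lp.ext; funext m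
  rw [lp.coeFn_smul]
  by_cases h : m = n
  · subst h
    simp [e, lp.single_apply_self]
  · simp [e, lp.single_apply_ne _ _ _ h, Pi.single_apply, h]

lemma diag_isSymmetric (c : ℕ → ℝ) {M : ℝ} (hM : ∀ n, |c n| ≤ M) :
    LinearMap.IsSymmetric ((diag c hM : H →L[ℂ] H) : H →ₗ[ℂ] H) := by
  intro x y
  rw [show (((diag c hM : H →L[ℂ] H) : H →ₗ[ℂ] H) x) = diag c hM x from rfl,
    show (((diag c hM : H →L[ℂ] H) : H →ₗ[ℂ] H) y) = diag c hM y from rfl,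
    lp.inner_eq_tsum, lp.inner_eq_tsum]
  refine tsum_congr fun n => ?_
  simp only [diag_apply, RCLike.inner_apply, map_mul, Complex.conj_ofReal]
  ring

lemma diag_selfAdjoint (c : ℕ → ℝ) {M : ℝ} (hM : ∀ n, |c n| ≤ M) :
    IsSelfAdjoint (diag c hM) :=
  ContinuousLinearMap.isSelfAdjoint_iff_isSymmetric.2 (diag_isSymmetric c hM)

lemma diag_isPositive (c : ℕ → ℝ) {M : ℝ} (hM : ∀ n, |c n| ≤ M) (hc : ∀ n, 0 ≤ c n) :
    (diag c hM).IsPositive := by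
  refine ⟨diag_isSymmetric c hM, fun x => ?_⟩
  rw [ContinuousLinearMap.reApplyInnerSelf_apply, RCLike.re_to_complex]
  have hs : HasSum (fun n => ⟪(diag c hM x) n, x n⟫_ℂ) ⟪diag c hM x, x⟫_ℂ :=
    lp.hasSum_inner _ _
  have hre : HasSum (fun n => (⟪(diag c hM x) n, x n⟫_ℂ).re) (⟪diag c hM x, x⟫_ℂ).re :=
    Complex.hasSum_re hs
  rw [← hre.tsum_eq]
  refine tsum_nonneg fun n => ?_
  simp only [diag_apply, RCLike.inner_apply, map_mul, Complex.conj_ofReal]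
  simp only [Complex.mul_re, Complex.mul_im, Complex.conj_re, Complex.conj_im,
    Complex.ofReal_re, Complex.ofReal_im]
  ring_nf
  nlinarith [hc n, sq_nonneg ((x n).re), sq_nonneg ((x n).im)]


lemma diag_comp (c d : ℕ → ℝ) {M N : ℝ} (hM : ∀ n, |c n| ≤ M) (hN : ∀ n, |d n| ≤ N)
    {P : ℝ} (hP : ∀ n, |c n * d n| ≤ P) :
    diag c hM ∘L diag d hN = diag (fun n => c n * d n) hP := by
  ext x : 1
  apply lp.ext; funext n
  simp only [ContinuousLinearMap.comp_apply, diag_apply]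
  push_cast
  ring

lemma diag_add (c d : ℕ → ℝ) {M N : ℝ} (hM : ∀ n, |c n| ≤ M) (hN : ∀ n, |d n| ≤ N)
    {P : ℝ} (hP : ∀ n, |c n + d n| ≤ P) :
    diag c hM + diag d hN = diag (fun n => c n + d n) hP := by
  ext x : 1
  apply lp.ext; funext n
  simp only [ContinuousLinearMap.add_apply, diag_apply, lp.coeFn_add, Pi.add_apply]
  push_cast
  ring

/-- positive operators kill approximate negative eigenvectors: if `T` is positive and
`T (T x) = μ² x` with `μ > 0`, then `T x = μ x`. -/
lemma eigen_of_sq {T : H →L[ℂ] H} (hT : T.IsPositive) {x : H} {μ : ℝ} (hμ : 0 < μ)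
    (h : T (T x) = ((μ ^ 2 : ℝ) : ℂ) • x) : T x = ((μ : ℝ) : ℂ) • x := by
  set y : H := T x - ((μ : ℝ) : ℂ) • x with hy
  have hTy : T y = -(((μ : ℝ) : ℂ) • y) := by
    rw [hy]
    rw [map_sub, map_smul, h]
    rw [smul_sub]
    push_cast
    rw [smul_smul]
    ring_nf
    rw [sub_eq_iff_eq_add]
    push_cast
    module
  have hpos := hT.2 y
  rw [ContinuousLinearMap.reApplyInnerSelf_apply, RCLike.re_to_complex, hTy] at hpos
  rw [inner_neg_left, inner_smul_left] at hpos
  have hinner : ⟪y, y⟫_ℂ = ((‖y‖ ^ 2 : ℝ) : ℂ) := by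
    rw [inner_self_eq_norm_sq_to_K]
    norm_cast
  rw [hinner] at hpos
  have : (-(conj (((μ : ℝ) : ℂ)) * ((‖y‖ ^ 2 : ℝ) : ℂ))).re = -(μ * ‖y‖ ^ 2) := by
    rw [Complex.conj_ofReal, ← Complex.ofReal_mul, ← Complex.ofReal_neg, Complex.ofReal_re]
  rw [this] at hpos
  have hy0 : ‖y‖ ^ 2 ≤ 0 := by nlinarith
  have : y = 0 := by
    have : ‖y‖ = 0 := by nlinarith [norm_nonneg y, sq_nonneg ‖y‖]
    exact norm_eq_zero.mp this
  rw [hy] at this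
  rw [sub_eq_zero] at this
  exact this


open Filter in
lemma diag_isCompact {c : ℕ → ℝ} {M : ℝ} (hM : ∀ n, |c n| ≤ M) (C : ℕ → ℝ)
    (hC : ∀ N k, N ≤ k → |c k| ≤ C N) (hC0 : Tendsto C atTop (nhds 0)) :
    IsCompactOperator ⇑(diag c hM) := by
  have hM0 : 0 ≤ M := le_trans (abs_nonneg _) (hM 0)
  have hC0' : ∀ N, 0 ≤ C N := fun N => le_trans (abs_nonneg _) (hC N N le_rfl)
  -- the one-dimensional pieces
  have hone : ∀ i, ∀ n, |(fun k => if k = i then c k else 0) n| ≤ M := by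
    intro i n
    by_cases h : n = i
    · subst h; simpa using hM n
    · simp [h, hM0]
  set P : ℕ → (H →L[ℂ] H) := fun i => diag (fun k => if k = i then c k else 0) (hone i) with hP
  have hPcompact : ∀ i, IsCompactOperator ⇑(P i) := by
    intro i
    refine ⟨(fun z : ℂ => z • e i) '' Metric.closedBall 0 |c i|, ?_, ?_⟩
    · exact (isCompact_closedBall 0 _).image (continuous_id.smul continuous_const)
    · refine Filter.mem_of_superset (Metric.closedBall_mem_nhds (0 : H) one_pos) ?_
      intro x hx
      refine ⟨(c i : ℂ) * x i, ?_, ?_⟩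
      · rw [Metric.mem_closedBall, dist_zero_right, norm_mul, Complex.norm_real,
          Real.norm_eq_abs]
        have h1 : ‖x i‖ ≤ 1 := by
          refine le_trans (lp.norm_apply_le_norm two_ne_zero x i) ?_
          simpa [dist_zero_right] using hx
        calc |c i| * ‖x i‖ ≤ |c i| * 1 := by
              exact mul_le_mul_of_nonneg_left h1 (abs_nonneg _)
          _ = |c i| := mul_one _
      · apply lp.ext; funext m
        rw [lp.coeFn_smul, Pi.smul_apply, smul_eq_mul]
        simp only [hP, diag_apply]
        by_cases h : m = i
        · subst h
          simp [e, lp.single_apply_self]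
        · simp [e, lp.single_apply_ne _ _ _ h, h]
  -- finite sums are compact
  have hFcompact : ∀ N, IsCompactOperator ⇑(∑ i ∈ Finset.range N, P i) := by
    intro N
    induction N with
    | zero => simpa using (isCompactOperator_zero : IsCompactOperator (0 : H → H))
    | succ n ih =>
        rw [Finset.sum_range_succ]
        rw [show (⇑(∑ i ∈ Finset.range n, P i + P n))
          = ⇑(∑ i ∈ Finset.range n, P i) + ⇑(P n) from rfl]
        exact ih.add (hPcompact n)
  -- tail bound
  have htail : ∀ N, ∀ k, |(fun k => if k < N then 0 else c k) k| ≤ C N := by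
    intro N k
    by_cases h : k < N
    · simpa [h] using hC0' N
    · push_neg at h
      simpa [if_neg (not_lt.2 h)] using hC N k h
  have hdiff : ∀ N, diag c hM - (∑ i ∈ Finset.range N, P i)
      = diag (fun k => if k < N then 0 else c k) (htail N) := by
    intro N
    ext x : 1
    apply lp.ext; funext m
    rw [ContinuousLinearMap.sub_apply, lp.coeFn_sub, Pi.sub_apply]
    have hsum : ((∑ i ∈ Finset.range N, P i) x) m
        = ∑ i ∈ Finset.range N, ((P i) x) m := by
      rw [ContinuousLinearMap.sum_apply, lp.coeFn_sum, Finset.sum_apply]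
    rw [hsum]
    simp only [hP, diag_apply]
    rw [← Finset.sum_mul]
    have hcast : ∀ i : ℕ, ((if m = i then c m else 0 : ℝ) : ℂ)
        = if m = i then (c m : ℂ) else 0 := by
      intro i; split_ifs <;> simp
    simp only [hcast]
    rw [Finset.sum_ite_eq (Finset.range N) m fun _ => ((c m : ℂ))]
    by_cases h : m < N
    · simp [Finset.mem_range.2 h, h]
    · have h' : m ∉ Finset.range N := by simpa [Finset.mem_range] using h
      simp [h, h']
  -- convergence
  have hconv : Tendsto (fun N => ∑ i ∈ Finset.range N, P i) atTop (nhds (diag c hM)) := by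
    rw [tendsto_iff_norm_sub_tendsto_zero]
    refine squeeze_zero (fun N => norm_nonneg _) (fun N => ?_) hC0
    rw [norm_sub_rev, hdiff N]
    exact diag_norm_le _ (htail N) (hC0' N)
  exact isCompactOperator_of_tendsto hconv (Eventually.of_forall hFcompact)


open Filter in
lemma const_inner_eq_zero {D : H →L[ℂ] H} (hD : IsCompactOperator ⇑D)
    {φ : ℕ → ℕ} (hφ : StrictMono φ) {κ : ℂ}
    (hκ : ∀ j, ⟪e (φ j), D (e (φ j))⟫_ℂ = κ) : κ = 0 := by
  obtain ⟨K, hK, hKmem⟩ := hD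
  obtain ⟨ε, hε, hball⟩ := Metric.mem_nhds_iff.1 hKmem
  set δ : ℝ := ε / 2 with hδdef
  have hδ : 0 < δ := by positivity
  have hu : ∀ j, D (((δ : ℝ) : ℂ) • e (φ j)) ∈ K := by
    intro j
    apply hball
    rw [Metric.mem_ball, dist_zero_right, norm_smul, norm_e, Complex.norm_real,
      Real.norm_eq_abs, abs_of_pos hδ, mul_one]
    rw [hδdef]; linarith
  obtain ⟨y, hyK, ψ, hψ, hlim⟩ := hK.tendsto_subseq hu
  set m : ℕ → ℕ := fun k => φ (ψ k) with hm
  have hmmono : StrictMono m := hφ.comp hψ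
  -- the constant sequence
  have hconst : ∀ k, ⟪e (m k), D (((δ : ℝ) : ℂ) • e (m k))⟫_ℂ = ((δ : ℝ) : ℂ) * κ := by
    intro k
    rw [map_smul, inner_smul_right, hκ]
  -- first piece tends to zero
  have hy2 : Summable fun n => ‖y n‖ ^ (2 : ℝ≥0∞).toReal := (lp.memℓp y).summable htoRealpos
  have hynorm : Tendsto (fun n => ‖y n‖) atTop (nhds 0) := by
    have h1 : Tendsto (fun n => ‖y n‖ ^ (2 : ℕ)) atTop (nhds 0) := by
      refine hy2.tendsto_atTop_zero.congr fun n => ?_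
      rw [show ((2 : ℝ≥0∞).toReal) = ((2 : ℕ) : ℝ) by norm_num, Real.rpow_natCast]
    have h3 : Tendsto (fun n => Real.sqrt (‖y n‖ ^ (2 : ℕ))) atTop (nhds (Real.sqrt 0)) :=
      (Real.continuous_sqrt.tendsto 0).comp h1
    rw [Real.sqrt_zero] at h3
    refine h3.congr fun n => ?_
    rw [Real.sqrt_sq (norm_nonneg _)]
  have hterm1 : Tendsto (fun k => ⟪e (m k), y⟫_ℂ) atTop (nhds 0) := by
    have hcoord : ∀ k, ⟪e (m k), y⟫_ℂ = y (m k) := by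
      intro k
      rw [e, lp.inner_single_left]
      simp
    rw [tendsto_zero_iff_norm_tendsto_zero]
    have : Tendsto (fun k => ‖y (m k)‖) atTop (nhds 0) :=
      hynorm.comp hmmono.tendsto_atTop
    refine this.congr fun k => ?_
    rw [hcoord]
  -- second piece tends to zero
  have hterm2 : Tendsto (fun k => ⟪e (m k), D (((δ : ℝ) : ℂ) • e (m k)) - y⟫_ℂ)
      atTop (nhds 0) := by
    rw [tendsto_zero_iff_norm_tendsto_zero]
    have hd : Tendsto (fun k => ‖D (((δ : ℝ) : ℂ) • e (m k)) - y‖) atTop (nhds 0) := by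
      have := hlim.sub (tendsto_const_nhds (x := y))
      rw [sub_self] at this
      exact (tendsto_zero_iff_norm_tendsto_zero.1 (by simpa [Function.comp] using this))
    refine squeeze_zero (fun k => norm_nonneg _) (fun k => ?_) hd
    calc ‖⟪e (m k), D (((δ : ℝ) : ℂ) • e (m k)) - y⟫_ℂ‖
        ≤ ‖e (m k)‖ * ‖D (((δ : ℝ) : ℂ) • e (m k)) - y‖ := norm_inner_le_norm _ _
      _ = ‖D (((δ : ℝ) : ℂ) • e (m k)) - y‖ := by rw [norm_e, one_mul]
  -- combine
  have hsplit : ∀ k, ⟪e (m k), D (((δ : ℝ) : ℂ) • e (m k))⟫_ℂ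
      = ⟪e (m k), y⟫_ℂ + ⟪e (m k), D (((δ : ℝ) : ℂ) • e (m k)) - y⟫_ℂ := by
    intro k
    rw [inner_sub_right]
    ring
  have hlimz : Tendsto (fun k => ⟪e (m k), D (((δ : ℝ) : ℂ) • e (m k))⟫_ℂ) atTop (nhds 0) := by
    have := hterm1.add hterm2
    rw [add_zero] at this
    exact this.congr fun k => (hsplit k).symm
  have hconst' : Tendsto (fun k => ⟪e (m k), D (((δ : ℝ) : ℂ) • e (m k))⟫_ℂ) atTop
      (nhds (((δ : ℝ) : ℂ) * κ)) := by
    refine tendsto_const_nhds.congr fun k => (hconst k).symm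
  have h0 : ((δ : ℝ) : ℂ) * κ = 0 := tendsto_nhds_unique hconst' hlimz
  have hδ0 : ((δ : ℝ) : ℂ) ≠ 0 := by
    simpa using hδ.ne'
  exact (mul_eq_zero.1 h0).resolve_left hδ0


/-! ### The specific sequences -/

def r (n : ℕ) : ℝ := ((n : ℝ) + 1)⁻¹
def aseq (n : ℕ) : ℝ := r n ^ 2
def bseq (n : ℕ) : ℝ := if n % 2 = 1 then 3 * r n ^ 2 else 0
def sseq (n : ℕ) : ℝ := if n % 2 = 1 then 2 * r n else r n

lemma r_pos (n : ℕ) : 0 < r n := by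
  rw [r]; positivity

lemma r_le_one (n : ℕ) : r n ≤ 1 := by
  rw [r]
  rw [inv_le_one_iff₀]
  right
  have : (0:ℝ) ≤ (n:ℝ) := Nat.cast_nonneg n
  linarith

lemma r_antitone : Antitone r := by
  intro i j hij
  rw [r, r]
  apply inv_anti₀
  · have : (0:ℝ) ≤ (i:ℝ) := Nat.cast_nonneg i
    linarith
  · have : (i : ℝ) ≤ j := Nat.cast_le.2 hij
    linarith

lemma aseq_nonneg (n : ℕ) : 0 ≤ aseq n := sq_nonneg _
lemma bseq_nonneg (n : ℕ) : 0 ≤ bseq n := by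
  rw [bseq]; split_ifs
  · positivity
  · exact le_refl 0

lemma aseq_bound (n : ℕ) : |aseq n| ≤ 1 := by
  rw [abs_of_nonneg (aseq_nonneg n), aseq]
  nlinarith [r_pos n, r_le_one n]

lemma bseq_bound (n : ℕ) : |bseq n| ≤ 3 := by
  rw [abs_of_nonneg (bseq_nonneg n), bseq]
  split_ifs
  · nlinarith [r_pos n, r_le_one n]
  · norm_num

lemma abseq_bound (n : ℕ) : |aseq n + bseq n| ≤ 4 := by
  have h1 := aseq_bound n
  have h2 := bseq_bound n
  have := abs_add_le (aseq n) (bseq n)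
  linarith

lemma sseq_pos (n : ℕ) : 0 < sseq n := by
  rw [sseq]; split_ifs
  · linarith [r_pos n]
  · exact r_pos n

lemma ab_eq_s_sq (n : ℕ) : aseq n + bseq n = sseq n ^ 2 := by
  rw [aseq, bseq, sseq]
  split_ifs
  · ring
  · ring

lemma aseq_tail (N k : ℕ) (h : N ≤ k) : |aseq k| ≤ 4 * r N := by
  rw [abs_of_nonneg (aseq_nonneg k), aseq]
  have h1 : r k ≤ r N := r_antitone h
  nlinarith [r_pos k, r_le_one k, r_pos N]

lemma bseq_tail (N k : ℕ) (h : N ≤ k) : |bseq k| ≤ 4 * r N := by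
  rw [abs_of_nonneg (bseq_nonneg k), bseq]
  have h1 : r k ≤ r N := r_antitone h
  split_ifs
  · nlinarith [r_pos k, r_le_one k, r_pos N]
  · nlinarith [r_pos N]

open Filter in
lemma r_tendsto : Tendsto (fun N => 4 * r N) atTop (nhds 0) := by
  have h : Tendsto (fun N : ℕ => ((N : ℝ) + 1)⁻¹) atTop (nhds 0) :=
    tendsto_one_div_add_atTop_nhds_zero_nat.congr fun n => by rw [one_div]
  have := h.const_mul (4 : ℝ)
  simpa [r] using this

/-! ### Main theorem ingredients -/

def A : H →L[ℂ] H := diag aseq aseq_bound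
def B : H →L[ℂ] H := diag bseq bseq_bound

lemma A_pos : A.IsPositive := diag_isPositive _ _ aseq_nonneg
lemma B_pos : B.IsPositive := diag_isPositive _ _ bseq_nonneg
lemma A_compact : IsCompactOperator ⇑A :=
  diag_isCompact _ (fun N => 4 * r N) aseq_tail r_tendsto
lemma B_compact : IsCompactOperator ⇑B :=
  diag_isCompact _ (fun N => 4 * r N) bseq_tail r_tendsto

lemma AB_eq : A + B = diag (fun n => aseq n + bseq n) abseq_bound :=
  diag_add _ _ _ _ _

lemma main : ∀ sA sAB : H →L[ℂ] H, sA.IsPositive → sA ∘L sA = A →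
    sAB.IsPositive → sAB ∘L sAB = A + B →
    ∀ (D : H →L[ℂ] H) (lam : ℂ), IsCompactOperator ⇑D →
      sA ≠ sAB ∘L (D + lam • (1 : H →L[ℂ] H)) := by
  intro sA sAB hsA hsA2 hsAB hsAB2 D lam hD h
  -- `sA` acts on basis vectors by `r n`
  have hkeyA : ∀ n, sA (e n) = ((r n : ℝ) : ℂ) • e n := by
    intro n
    refine eigen_of_sq hsA (r_pos n) ?_
    have := congrArg (fun T => T (e n)) hsA2
    simp only [ContinuousLinearMap.comp_apply] at this
    rw [this, A, diag_single]
    norm_cast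
  have hkeyAB : ∀ n, sAB (e n) = ((sseq n : ℝ) : ℂ) • e n := by
    intro n
    refine eigen_of_sq hsAB (sseq_pos n) ?_
    have := congrArg (fun T => T (e n)) hsAB2
    simp only [ContinuousLinearMap.comp_apply] at this
    rw [this, AB_eq, diag_single, ab_eq_s_sq]
  -- symmetry of sAB
  have hsym := hsAB.1
  -- the inner product identity
  have hinner : ∀ n, ⟪e n, D (e n)⟫_ℂ = ((r n / sseq n : ℝ) : ℂ) - lam := by
    intro n
    have happ := congrArg (fun T => T (e n)) h
    simp only [ContinuousLinearMap.comp_apply, ContinuousLinearMap.add_apply,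
      ContinuousLinearMap.smul_apply, ContinuousLinearMap.one_apply] at happ
    rw [hkeyA n, map_add, map_smul, hkeyAB n] at happ
    -- take inner product with e n
    have hin := congrArg (fun z => ⟪e n, z⟫_ℂ) happ
    simp only [inner_add_right, inner_smul_right, inner_e_e] at hin
    -- handle the D term via symmetry
    have hDterm : ⟪e n, sAB (D (e n))⟫_ℂ = ((sseq n : ℝ) : ℂ) * ⟪e n, D (e n)⟫_ℂ := by
      have h1 : ⟪sAB (e n), D (e n)⟫_ℂ = ⟪e n, sAB (D (e n))⟫_ℂ := hsym _ _
      rw [← h1, hkeyAB n, inner_smul_left, Complex.conj_ofReal]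
    rw [hDterm] at hin
    -- hin : r n = s n * ⟪e n, D e n⟫ + lam * s n
    have hs0 : ((sseq n : ℝ) : ℂ) ≠ 0 := by
      simpa using (sseq_pos n).ne'
    rw [Complex.ofReal_div, eq_sub_iff_add_eq, eq_div_iff hs0]
    linear_combination -hin
  -- even indices
  have heven : (1 : ℂ) - lam = 0 := by
    refine const_inner_eq_zero hD (φ := fun j => 2 * j)
      (fun i j hij => by show 2 * i < 2 * j; omega) (κ := (1 : ℂ) - lam) fun j => ?_
    rw [hinner (2 * j)]
    have : sseq (2 * j) = r (2 * j) := by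
      rw [sseq, if_neg (by omega)]
    rw [this, div_self (r_pos (2 * j)).ne']
    norm_num
  have hodd : ((1 / 2 : ℝ) : ℂ) - lam = 0 := by
    refine const_inner_eq_zero hD (φ := fun j => 2 * j + 1)
      (fun i j hij => by show 2 * i + 1 < 2 * j + 1; omega)
      (κ := ((1 / 2 : ℝ) : ℂ) - lam) fun j => ?_
    rw [hinner (2 * j + 1)]
    have h2 : sseq (2 * j + 1) = 2 * r (2 * j + 1) := by
      rw [sseq, if_pos (by omega)]
    rw [h2]
    have : r (2 * j + 1) / (2 * r (2 * j + 1)) = 1 / 2 := by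
      rw [div_eq_iff (by nlinarith [r_pos (2*j+1)] : (2 * r (2*j+1)) ≠ 0)]
      ring
    rw [this]
  have : lam = 1 := by linear_combination -heven
  rw [this] at hodd
  have : ((1 / 2 : ℝ) : ℂ) = 1 := by linear_combination hodd
  norm_num at this

end SqrtCX

/-- There exist a complex Hilbert space `E` and positive compact operators `A`, `B` on `E`
such that the equation `A^{1/2} = (A+B)^{1/2} ∘ (D + λ • I)` has no solution with `D`
compact and `λ ∈ ℂ`; i.e. `A^{1/2} = (A+B)^{1/2} X` is unsolvable in the unitization of the
compact operators. -/
theorem exists_sqrt_equation_unsolvable :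
    ∃ (E : Type) (_ : NormedAddCommGroup E) (_ : InnerProductSpace ℂ E) (_ : CompleteSpace E),
      ∃ A B : E →L[ℂ] E,
        A.IsPositive ∧ B.IsPositive ∧ IsCompactOperator ⇑A ∧ IsCompactOperator ⇑B ∧
        ∀ sA sAB : E →L[ℂ] E, sA.IsPositive → sA ∘L sA = A →
          sAB.IsPositive → sAB ∘L sAB = A + B →
          ∀ (D : E →L[ℂ] E) (lam : ℂ), IsCompactOperator ⇑D →
            sA ≠ sAB ∘L (D + lam • (1 : E →L[ℂ] E)) := by
  exact ⟨SqrtCX.H, inferInstance, inferInstance, inferInstance, SqrtCX.A, SqrtCX.B,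
    SqrtCX.A_pos, SqrtCX.B_pos, SqrtCX.A_compact, SqrtCX.B_compact, SqrtCX.main⟩
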